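/- arXiv:2202.12981 — 2 statements merged into one kernel-verified Lean document; each statement's English description precedes it below -/
import Mathlib

section
/- For every positive-definite real n×n matrix Σ, one has φ_{Σ₀}(Σ) ≥ φ_{Σ₀}(Σ₀). Equivalently, the true covariance matrix Σ₀ maximizes over positive-definite Σ the expected Vecchia log-likelihood E_{y∼N_n(0,Σ₀)}[ ∑_{i=1}^n log p_Σ(y_i | y_{c(i)}) ]. -/
open Matrix

noncomputable section

/-- The principal submatrix of `M` on the index set `S`. -/
def psub {n : ℕ} (M : Matrix (Fin n) (Fin n) ℝ) (S : Finset (Fin n)) :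
    Matrix {x // x ∈ S} {x // x ∈ S} ℝ :=
  M.submatrix (fun i => (i : Fin n)) (fun j => (j : Fin n))

/-- The Vecchia cross-entropy functional
`φ_{C₀}(Σ) = ∑ i, [ ( tr((Σ_{A(i)})⁻¹ (C₀)_{A(i)}) + log det Σ_{A(i)} )
              − ( tr((Σ_{c(i)})⁻¹ (C₀)_{c(i)}) + log det Σ_{c(i)} ) ]`
where `A(i) = {i} ∪ c(i)`. -/
def vecchiaCrossEntropy {n : ℕ} (c : Fin n → Finset (Fin n))
    (C₀ C₁ : Matrix (Fin n) (Fin n) ℝ) : ℝ :=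
  ∑ i : Fin n,
    ((Matrix.trace ((psub C₁ (insert i (c i)))⁻¹ * psub C₀ (insert i (c i))) +
        Real.log (psub C₁ (insert i (c i))).det) -
      (Matrix.trace ((psub C₁ (c i))⁻¹ * psub C₀ (c i)) +
        Real.log (psub C₁ (c i)).det))

set_option linter.unusedSectionVars false


lemma trace_submatrix_equiv {l m : Type*} [Fintype l] [Fintype m]
    (M : Matrix m m ℝ) (e : l ≃ m) : (M.submatrix e e).trace = M.trace := by
  simp only [Matrix.trace, Matrix.diag, submatrix_apply]
  exact Fintype.sum_equiv e _ _ (fun i => rfl)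

lemma unit_det (N : Matrix Unit Unit ℝ) : N.det = N () () := by
  rw [Matrix.det_unique]

lemma unit_trace (N : Matrix Unit Unit ℝ) : N.trace = N () () := by
  simp [Matrix.trace, Matrix.diag]

lemma unit_eq_smul_one (N : Matrix Unit Unit ℝ) : N = N () () • 1 := by
  ext i j; cases i; cases j; simp [Matrix.one_apply]

lemma unit_entry_transpose {m : Type*} [Fintype m] (u v : Matrix m Unit ℝ)
    (M : Matrix m m ℝ) : (uᵀ * M * v) () () = (vᵀ * Mᵀ * u) () () := by
  have : vᵀ * Mᵀ * u = (uᵀ * M * v)ᵀ := by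
    rw [transpose_mul, transpose_mul, transpose_transpose, Matrix.mul_assoc]
  rw [this, transpose_apply]

lemma my_trace_fromBlocks {m : Type*} [Fintype m]
    (A : Matrix m m ℝ) (B : Matrix m Unit ℝ) (C : Matrix Unit m ℝ) (D : Matrix Unit Unit ℝ) :
    (fromBlocks A B C D).trace = A.trace + D.trace := by
  simp [Matrix.trace, Matrix.diag, Fintype.sum_sum_type, fromBlocks]

section
variable {m : Type*} [Fintype m] [DecidableEq m]

lemma blocks_decomp (Q : Matrix (m ⊕ Unit) (m ⊕ Unit) ℝ) (hQ : Q.IsHermitian) :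
    Q = fromBlocks Q.toBlocks₁₁ Q.toBlocks₁₂ (Q.toBlocks₁₂)ᵀ Q.toBlocks₂₂ := by
  have hs : ∀ i j, Q j i = Q i j := by
    intro i j
    conv_lhs => rw [← hQ]
    simp [conjTranspose_apply]
  have h21 : Q.toBlocks₂₁ = (Q.toBlocks₁₂)ᵀ := by
    ext i j
    exact hs (Sum.inl j) (Sum.inr i)
  conv_lhs => rw [← fromBlocks_toBlocks Q, h21]


-- inverse of a symmetric positive block matrix
lemma block_inv (A : Matrix m m ℝ) (B : Matrix m Unit ℝ) (D : Matrix Unit Unit ℝ)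
    (hA : IsUnit A.det) (hAT : Aᵀ = A)
    (σ : ℝ) (hσ : σ ≠ 0) (hs : D - Bᵀ * A⁻¹ * B = σ • 1) :
    (fromBlocks A B Bᵀ D)⁻¹ =
      fromBlocks (A⁻¹ + σ⁻¹ • ((A⁻¹ * B) * (A⁻¹ * B)ᵀ)) (-(σ⁻¹ • (A⁻¹ * B)))
        (-(σ⁻¹ • (A⁻¹ * B)ᵀ)) (σ⁻¹ • 1) := by
  set t := σ⁻¹ with ht
  set b := A⁻¹ * B with hb
  have hAinv : A * A⁻¹ = 1 := mul_nonsing_inv _ hA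
  have hAb : A * b = B := by rw [hb, ← Matrix.mul_assoc, hAinv, Matrix.one_mul]
  have hbt : bᵀ = Bᵀ * A⁻¹ := by
    rw [hb, transpose_mul, transpose_nonsing_inv, hAT]
  have hinv : t * σ = 1 := inv_mul_cancel₀ hσ
  apply inv_eq_right_inv
  rw [fromBlocks_multiply]
  have h11 : A * (A⁻¹ + t • (b * bᵀ)) + B * (-(t • bᵀ)) = 1 := by
    rw [Matrix.mul_add, hAinv, Matrix.mul_smul, ← Matrix.mul_assoc, hAb,
      Matrix.mul_neg, Matrix.mul_smul]
    abel
  have h12 : A * (-(t • b)) + B * (t • (1 : Matrix Unit Unit ℝ)) = 0 := by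
    have e1 : A * (t • b) = t • B := by rw [Matrix.mul_smul, hAb]
    have e2 : B * (t • (1 : Matrix Unit Unit ℝ)) = t • B := by
      rw [Matrix.mul_smul, Matrix.mul_one]
    rw [Matrix.mul_neg, e1, e2]
    abel
  have h21 : Bᵀ * (A⁻¹ + t • (b * bᵀ)) + D * (-(t • bᵀ)) = 0 := by
    have e1 : Bᵀ * (A⁻¹ + t • (b * bᵀ)) + D * (-(t • bᵀ))
        = Bᵀ * A⁻¹ + t • (Bᵀ * (b * bᵀ) - D * bᵀ) := by
      rw [Matrix.mul_add, Matrix.mul_smul, Matrix.mul_neg, Matrix.mul_smul, smul_sub]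
      abel
    have e2 : Bᵀ * (b * bᵀ) - D * bᵀ = -(σ • bᵀ) := by
      rw [← Matrix.mul_assoc, ← Matrix.sub_mul]
      have e3 : Bᵀ * b - D = -(σ • 1) := by
        rw [← hs, hb, Matrix.mul_assoc]
        · abel
      rw [e3, Matrix.neg_mul, Matrix.smul_mul, Matrix.one_mul]
    rw [e1, e2, smul_neg, smul_smul, hinv, one_smul, hbt]
    abel
  have h22 : Bᵀ * (-(t • b)) + D * (t • 1) = 1 := by
    rw [Matrix.mul_neg, Matrix.mul_smul, Matrix.mul_smul, Matrix.mul_one]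
    have : -(t • (Bᵀ * b)) + t • D = t • (D - Bᵀ * A⁻¹ * B) := by
      rw [smul_sub, hb, Matrix.mul_assoc]
      abel
    rw [this, hs, smul_smul, hinv, one_smul]
  rw [h11, h12, h21, h22, fromBlocks_one]

end

section
variable {m : Type*} [Fintype m] [DecidableEq m]

lemma posDef_submatrix_inj {l : Type*} [Fintype l] [DecidableEq l]
    {M : Matrix m m ℝ} (hM : M.PosDef) (f : l → m) (hf : Function.Injective f) :
    (M.submatrix f f).PosDef := by
  refine Matrix.PosDef.of_dotProduct_mulVec_pos (hM.1.submatrix f) fun x hx => ?_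
  set E : Matrix m l ℝ := (1 : Matrix m m ℝ).submatrix id f with hE
  have hsub : M.submatrix f f = Eᴴ * M * E := by
    ext i k
    simp [hE, Matrix.mul_apply, Matrix.one_apply]
  have hEx : E *ᵥ x ≠ 0 := by
    intro h
    apply hx
    funext i
    have := congrFun h (f i)
    simpa [hE, Matrix.mulVec, dotProduct, Matrix.one_apply, hf.eq_iff] using this
  have key : star x ⬝ᵥ (M.submatrix f f) *ᵥ x = star (E *ᵥ x) ⬝ᵥ M *ᵥ (E *ᵥ x) := by
    rw [hsub, star_mulVec, ← Matrix.mulVec_mulVec, ← Matrix.mulVec_mulVec,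
      Matrix.dotProduct_mulVec (star x) Eᴴ]
  rw [key]
  exact hM.dotProduct_mulVec_pos hEx

lemma quad_entry_nonneg {M : Matrix m m ℝ} (hM : M.PosSemidef)
    (u : Matrix m Unit ℝ) : 0 ≤ (uᵀ * M * u) () () := by
  have h : (uᵀ * M * u) () () = star (fun j => u j ()) ⬝ᵥ M *ᵥ (fun j => u j ()) := by
    simp only [Matrix.mul_apply, dotProduct, Matrix.mulVec, transpose_apply, star_trivial]
    simp_rw [Finset.sum_mul, Finset.mul_sum]
    rw [Finset.sum_comm]
    exact Finset.sum_congr rfl fun i _ => Finset.sum_congr rfl fun j _ => by ring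
  rw [h]
  exact hM.dotProduct_mulVec_nonneg _

lemma key_block (P Q : Matrix (m ⊕ Unit) (m ⊕ Unit) ℝ) (hP : P.PosDef) (hQ : Q.PosDef) :
    Matrix.trace (P⁻¹ * P) + Real.log P.det -
      (Matrix.trace ((P.toBlocks₁₁)⁻¹ * P.toBlocks₁₁) + Real.log (P.toBlocks₁₁).det)
    ≤ Matrix.trace (Q⁻¹ * P) + Real.log Q.det -
      (Matrix.trace ((Q.toBlocks₁₁)⁻¹ * P.toBlocks₁₁) + Real.log (Q.toBlocks₁₁).det) := by
  -- notation for blocks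
  set A₁ := Q.toBlocks₁₁ with hA₁
  set B₁ := Q.toBlocks₁₂ with hB₁
  set D₁ := Q.toBlocks₂₂ with hD₁
  set A₀ := P.toBlocks₁₁ with hA₀
  set B₀ := P.toBlocks₁₂ with hD₀
  set D₀ := P.toBlocks₂₂ with hB₀
  have hQb : Q = fromBlocks A₁ B₁ B₁ᵀ D₁ := blocks_decomp Q hQ.1
  have hPb : P = fromBlocks A₀ B₀ B₀ᵀ D₀ := blocks_decomp P hP.1
  have hA1 : A₁.PosDef := posDef_submatrix_inj hQ Sum.inl Sum.inl_injective
  have hA0 : A₀.PosDef := posDef_submatrix_inj hP Sum.inl Sum.inl_injective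
  have hdQ : 0 < Q.det := hQ.det_pos
  have hdP : 0 < P.det := hP.det_pos
  have hdA1 : 0 < A₁.det := hA1.det_pos
  have hdA0 : 0 < A₀.det := hA0.det_pos
  haveI : Invertible A₁ := A₁.invertibleOfIsUnitDet (isUnit_iff_ne_zero.mpr hdA1.ne')
  haveI : Invertible A₀ := A₀.invertibleOfIsUnitDet (isUnit_iff_ne_zero.mpr hdA0.ne')
  have hA1T : A₁ᵀ = A₁ := by
    ext i j; simpa using (congrFun (congrFun hA1.1 i) j)
  have hA0T : A₀ᵀ = A₀ := by
    ext i j; simpa using (congrFun (congrFun hA0.1 i) j)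
  set σ₁ : ℝ := (D₁ - B₁ᵀ * A₁⁻¹ * B₁) () () with hσ₁
  set σ₀ : ℝ := (D₀ - B₀ᵀ * A₀⁻¹ * B₀) () () with hσ₀
  have hs₁ : D₁ - B₁ᵀ * A₁⁻¹ * B₁ = σ₁ • 1 := unit_eq_smul_one _
  have hs₀ : D₀ - B₀ᵀ * A₀⁻¹ * B₀ = σ₀ • 1 := unit_eq_smul_one _
  have hdetQ : Q.det = A₁.det * σ₁ := by
    conv_lhs => rw [hQb]
    rw [det_fromBlocks₁₁, invOf_eq_nonsing_inv, unit_det]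
  have hdetP : P.det = A₀.det * σ₀ := by
    conv_lhs => rw [hPb]
    rw [det_fromBlocks₁₁, invOf_eq_nonsing_inv, unit_det]
  have hσ₁pos : 0 < σ₁ := by
    have := hdQ; rw [hdetQ] at this; nlinarith
  have hσ₀pos : 0 < σ₀ := by
    have := hdP; rw [hdetP] at this; nlinarith
  set b := A₁⁻¹ * B₁ with hbdef
  set t := σ₁⁻¹ with htdef
  have hQinv : Q⁻¹ = fromBlocks (A₁⁻¹ + t • (b * bᵀ)) (-(t • b)) (-(t • bᵀ)) (t • 1) := by
    conv_lhs => rw [hQb]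
    exact block_inv A₁ B₁ D₁ (isUnit_iff_ne_zero.mpr hdA1.ne') hA1T σ₁ hσ₁pos.ne' hs₁
  have entry_swap : ∀ (u v : Matrix m Unit ℝ), (uᵀ * v) () () = (vᵀ * u) () () := by
    intro u v
    rw [show vᵀ * u = (uᵀ * v)ᵀ from by rw [transpose_mul, transpose_transpose]]
    rfl
  have htrace : Matrix.trace (Q⁻¹ * P) = Matrix.trace (A₁⁻¹ * A₀)
      + t * ((bᵀ * A₀ * b) () () - 2 * (bᵀ * B₀) () () + D₀ () ()) := by
    rw [hQinv]
    conv_lhs => rw [hPb]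
    rw [fromBlocks_multiply, my_trace_fromBlocks]
    have e1 : (A₁⁻¹ + t • (b * bᵀ)) * A₀ + (-(t • b)) * B₀ᵀ
        = A₁⁻¹ * A₀ + t • (b * bᵀ * A₀) + (-(t • (b * B₀ᵀ))) := by
      rw [Matrix.add_mul, Matrix.smul_mul, Matrix.neg_mul, Matrix.smul_mul]
    have e2 : (-(t • bᵀ)) * B₀ + (t • 1) * D₀
        = -(t • (bᵀ * B₀)) + t • D₀ := by
      rw [Matrix.neg_mul, Matrix.smul_mul, Matrix.smul_mul, Matrix.one_mul]
    rw [e1, e2, Matrix.trace_add, Matrix.trace_add, Matrix.trace_add, trace_neg, trace_neg,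
      Matrix.trace_smul, Matrix.trace_smul, Matrix.trace_smul, Matrix.trace_smul]
    have e3 : Matrix.trace (b * bᵀ * A₀) = (bᵀ * A₀ * b) () () := by
      rw [Matrix.mul_assoc, trace_mul_comm, ← Matrix.mul_assoc, unit_trace]
    have e4 : Matrix.trace (b * B₀ᵀ) = (bᵀ * B₀) () () := by
      rw [trace_mul_comm, unit_trace, entry_swap]
    have e5 : Matrix.trace (bᵀ * B₀) = (bᵀ * B₀) () () := unit_trace _
    have e6 : Matrix.trace D₀ = D₀ () () := unit_trace _
    rw [e3, e4, e5, e6]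
    simp only [smul_eq_mul]
    ring
  set q := (bᵀ * A₀ * b) () () - 2 * (bᵀ * B₀) () () + D₀ () () with hqdef
  set b₀ := A₀⁻¹ * B₀ with hb₀def
  have hA₀b₀ : A₀ * b₀ = B₀ := by
    rw [hb₀def, ← Matrix.mul_assoc, mul_nonsing_inv _ (isUnit_iff_ne_zero.mpr hdA0.ne'),
      Matrix.one_mul]
  have hb₀t : b₀ᵀ * A₀ = B₀ᵀ := by
    rw [hb₀def, transpose_mul, transpose_nonsing_inv, hA0T, Matrix.mul_assoc,
      nonsing_inv_mul _ (isUnit_iff_ne_zero.mpr hdA0.ne'), Matrix.mul_one]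
  have expand : (b - b₀)ᵀ * A₀ * (b - b₀)
      = bᵀ * A₀ * b - bᵀ * B₀ - B₀ᵀ * b + B₀ᵀ * b₀ := by
    rw [transpose_sub, Matrix.sub_mul, hb₀t, Matrix.mul_sub,
      Matrix.sub_mul, Matrix.sub_mul]
    have : bᵀ * A₀ * b₀ = bᵀ * B₀ := by
      rw [Matrix.mul_assoc, hA₀b₀]
    rw [this]
    abel
  have hqeq : q = ((b - b₀)ᵀ * A₀ * (b - b₀)) () () + σ₀ := by
    rw [expand]
    have h1 : (B₀ᵀ * b) () () = (bᵀ * B₀) () () := entry_swap B₀ b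
    have h2 : (B₀ᵀ * b₀) () () = (B₀ᵀ * A₀⁻¹ * B₀) () () := by
      rw [hb₀def, Matrix.mul_assoc]
    simp only [Matrix.sub_apply, Matrix.add_apply, hqdef, hσ₀]
    rw [h1, h2]
    ring
  have hqge : σ₀ ≤ q := by
    have := quad_entry_nonneg hA0.posSemidef (b - b₀)
    rw [hqeq]
    linarith
  have hPinvP : Matrix.trace (P⁻¹ * P) = (Fintype.card m : ℝ) + 1 := by
    rw [nonsing_inv_mul _ (isUnit_iff_ne_zero.mpr hdP.ne'), Matrix.trace_one]
    simp [Fintype.card_sum]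
  have hA0invA0 : Matrix.trace (A₀⁻¹ * A₀) = (Fintype.card m : ℝ) := by
    rw [nonsing_inv_mul _ (isUnit_iff_ne_zero.mpr hdA0.ne'), Matrix.trace_one]
  have hlogQ : Real.log Q.det = Real.log A₁.det + Real.log σ₁ := by
    rw [hdetQ, Real.log_mul hdA1.ne' hσ₁pos.ne']
  have hlogP : Real.log P.det = Real.log A₀.det + Real.log σ₀ := by
    rw [hdetP, Real.log_mul hdA0.ne' hσ₀pos.ne']
  rw [htrace, hPinvP, hA0invA0, hlogQ, hlogP]
  have hlog := Real.log_le_sub_one_of_pos (show (0:ℝ) < σ₀/σ₁ from div_pos hσ₀pos hσ₁pos)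
  rw [Real.log_div hσ₀pos.ne' hσ₁pos.ne'] at hlog
  have htq : σ₀/σ₁ ≤ t * q := by
    rw [htdef, div_eq_inv_mul]
    exact mul_le_mul_of_nonneg_left hqge (inv_nonneg.mpr hσ₁pos.le)
  linarith

end

section
variable {n : ℕ}

lemma step_ineq (C₀ C₁ : Matrix (Fin n) (Fin n) ℝ) (hC₀ : C₀.PosDef) (hC₁ : C₁.PosDef)
    (i : Fin n) (S : Finset (Fin n)) (hiS : i ∉ S) :
    ((Matrix.trace ((psub C₀ (insert i S))⁻¹ * psub C₀ (insert i S)) +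
        Real.log (psub C₀ (insert i S)).det) -
      (Matrix.trace ((psub C₀ S)⁻¹ * psub C₀ S) + Real.log (psub C₀ S).det))
    ≤ ((Matrix.trace ((psub C₁ (insert i S))⁻¹ * psub C₀ (insert i S)) +
        Real.log (psub C₁ (insert i S)).det) -
      (Matrix.trace ((psub C₁ S)⁻¹ * psub C₀ S) + Real.log (psub C₁ S).det)) := by
  classical
  let e : ({x // x ∈ S} ⊕ Unit) ≃ {x // x ∈ insert i S} :=
  { toFun := Sum.elim (fun j => ⟨j.1, Finset.mem_insert_of_mem j.2⟩)
      (fun _ => ⟨i, Finset.mem_insert_self i S⟩)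
    invFun := fun x => if h : (x : Fin n) ∈ S then Sum.inl ⟨x, h⟩ else Sum.inr ()
    left_inv := by
      rintro (⟨j, hj⟩ | ⟨⟩)
      · simp [hj]
      · simp [hiS]
    right_inv := by
      rintro ⟨x, hx⟩
      by_cases h : x ∈ S
      · simp [h]
      · have hxi : x = i := by
          rcases Finset.mem_insert.mp hx with h' | h'
          · exact h'
          · exact absurd h' h
        subst hxi
        simp [h] }
  set P' := (psub C₀ (insert i S)).submatrix e e with hP'def
  set Q' := (psub C₁ (insert i S)).submatrix e e with hQ'def
  have hP' : P'.PosDef :=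
    posDef_submatrix_inj hC₀ (fun x => ((e x : {x // x ∈ insert i S}) : Fin n))
      (fun a b hab => e.injective (Subtype.val_injective hab))
  have hQ' : Q'.PosDef :=
    posDef_submatrix_inj hC₁ (fun x => ((e x : {x // x ∈ insert i S}) : Fin n))
      (fun a b hab => e.injective (Subtype.val_injective hab))
  have h0P : P'.toBlocks₁₁ = psub C₀ S := by ext a b; rfl
  have h0Q : Q'.toBlocks₁₁ = psub C₁ S := by ext a b; rfl
  have htrQ : Matrix.trace (Q'⁻¹ * P')
      = Matrix.trace ((psub C₁ (insert i S))⁻¹ * psub C₀ (insert i S)) := by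
    rw [hQ'def, hP'def, inv_submatrix_equiv, submatrix_mul_equiv, trace_submatrix_equiv]
  have htrP : Matrix.trace (P'⁻¹ * P')
      = Matrix.trace ((psub C₀ (insert i S))⁻¹ * psub C₀ (insert i S)) := by
    rw [hP'def, inv_submatrix_equiv, submatrix_mul_equiv, trace_submatrix_equiv]
  have hdetQ : Q'.det = (psub C₁ (insert i S)).det := det_submatrix_equiv_self e _
  have hdetP : P'.det = (psub C₀ (insert i S)).det := det_submatrix_equiv_self e _
  have key := key_block P' Q' hP' hQ'
  rw [h0P, h0Q, htrQ, htrP, hdetQ, hdetP] at key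
  exact key

end

/-- the true covariance matrix `C₀` minimizes the Vecchia cross-entropy
`φ_{C₀}` over positive-definite matrices `Σ`, i.e. `C₀` maximizes the expected Vecchia
log-likelihood `E_{y∼N(0,C₀)}[∑ i, log p_Σ(y_i | y_{c(i)})]`. -/
theorem vecchiaCrossEntropy_ge (n : ℕ) (hn : 1 ≤ n) (c : Fin n → Finset (Fin n))
    (hc : ∀ i : Fin n, ∀ j ∈ c i, j < i)
    (C₀ : Matrix (Fin n) (Fin n) ℝ) (hC₀ : C₀.PosDef)
    (C₁ : Matrix (Fin n) (Fin n) ℝ) (hC₁ : C₁.PosDef) :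
    vecchiaCrossEntropy c C₀ C₁ ≥ vecchiaCrossEntropy c C₀ C₀ := by
  unfold vecchiaCrossEntropy
  rw [ge_iff_le]
  apply Finset.sum_le_sum
  intro i _
  have hiS : i ∉ c i := fun h => lt_irrefl i (hc i i h)
  exact step_ineq C₀ C₁ hC₀ hC₁ i (c i) hiS

end
end

section
/- Let y be a random vector in ℝⁿ with the centered multivariate Gaussian distribution N_n(0, Σ₀), Σ₀ positive definite. Then for every symmetric real n×n matrix M, the expected Vecchia score at the true covariance vanishes: ∑_{i=1}^n [ ( E[ y_{A(i)}ᵀ ((Σ₀)_{A(i)})⁻¹ M_{A(i)} ((Σ₀)_{A(i)})⁻¹ y_{A(i)} ] − tr(((Σ₀)_{A(i)})⁻¹ M_{A(i)}) ) − ( E[ y_{c(i)}ᵀ ((Σ₀)_{c(i)})⁻¹ M_{c(i)} ((Σ₀)_{c(i)})⁻¹ y_{c(i)} ] − tr(((Σ₀)_{c(i)})⁻¹ M_{c(i)}) ) ] = 0. In other words, the Vecchia gradient equations ∇ℓ̂(θ) = 0 are unbiased estimating equations at the true parameter. -/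
open MeasureTheory ProbabilityTheory Matrix

noncomputable section

/-- The centered multivariate Gaussian measure `N_n(0, S)` on `ℝⁿ`, realized as the pushforward
of the i.i.d. standard normal measure under multiplication by the positive-semidefinite square
root of the covariance matrix `S`. -/
def multivariateGaussian {n : ℕ} {S : Matrix (Fin n) (Fin n) ℝ} (hS : S.PosSemidef) :
    Measure (Fin n → ℝ) :=
  (Measure.pi fun _ : Fin n => gaussianReal 0 1).map (fun z => ((hS.1.eigenvectorUnitary : Matrix (Fin n) (Fin n) ℝ) *
    diagonal (Real.sqrt ∘ hS.1.eigenvalues) *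
    (star hS.1.eigenvectorUnitary : Matrix (Fin n) (Fin n) ℝ)).mulVec z)

/-- The subvector of `y` on the index set `S`. -/
def subvec {n : ℕ} (y : Fin n → ℝ) (S : Finset (Fin n)) : {x // x ∈ S} → ℝ :=
  fun i => y (i : Fin n)

/-- One half of the directional derivative, in the direction `M`, of a single Vecchia
log-likelihood term, as a function of the observation `y`:
`y_Sᵀ (C_S)⁻¹ M_S (C_S)⁻¹ y_S − tr((C_S)⁻¹ M_S)`. -/
def vecchiaScoreTerm {n : ℕ} (C M : Matrix (Fin n) (Fin n) ℝ) (S : Finset (Fin n))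
    (y : Fin n → ℝ) : ℝ :=
  subvec y S ⬝ᵥ ((psub C S)⁻¹ * psub M S * (psub C S)⁻¹).mulVec (subvec y S) -
    Matrix.trace ((psub C S)⁻¹ * psub M S)

namespace VecchiaAux

open Real Filter Set Topology
open scoped ENNReal NNReal

/-! ### Moments of the standard real Gaussian -/

lemma gauss_withDensity : gaussianReal 0 1
    = (volume : Measure ℝ).withDensity
        (fun x => ((Real.toNNReal (gaussianPDFReal 0 1 x)) : ℝ≥0∞)) := by
  rw [gaussianReal_of_var_ne_zero _ one_ne_zero]; rfl

lemma pdf01 (x : ℝ) : gaussianPDFReal 0 1 x = (√(2*π))⁻¹ * rexp (-(1/2) * x ^ 2) := by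
  rw [gaussianPDFReal]
  norm_num
  exact Or.inl (by ring)

lemma integral_gauss (g : ℝ → ℝ) :
    ∫ x, g x ∂(gaussianReal 0 1) = ∫ x, gaussianPDFReal 0 1 x * g x := by
  rw [gauss_withDensity,
    integral_withDensity_eq_integral_smul (measurable_gaussianPDFReal 0 1).real_toNNReal]
  refine integral_congr_ae (Eventually.of_forall fun x => ?_)
  simp [NNReal.smul_def, Real.coe_toNNReal _ (gaussianPDFReal_nonneg 0 1 x)]

lemma integrable_gauss_iff (g : ℝ → ℝ) :
    Integrable g (gaussianReal 0 1) ↔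
      Integrable (fun x => gaussianPDFReal 0 1 x * g x) volume := by
  rw [gauss_withDensity,
    integrable_withDensity_iff_integrable_smul (measurable_gaussianPDFReal 0 1).real_toNNReal]
  refine integrable_congr (Eventually.of_forall fun x => ?_)
  simp [NNReal.smul_def, Real.coe_toNNReal _ (gaussianPDFReal_nonneg 0 1 x)]

lemma integrable_id_gauss : Integrable (fun x => x) (gaussianReal 0 1) := by
  rw [integrable_gauss_iff]
  have h := (integrable_mul_exp_neg_mul_sq (b := 1/2) (by norm_num)).const_mul (√(2*π))⁻¹
  refine h.congr (Eventually.of_forall fun x => ?_)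
  simp only [pdf01]; ring

lemma integral_id_gauss : ∫ x, x ∂(gaussianReal 0 1) = 0 := by
  have hmap : Measure.map (fun x => (-1 : ℝ) * x) (gaussianReal 0 1) = gaussianReal 0 1 := by
    rw [gaussianReal_map_const_mul (-1)]
    norm_num
  have := integral_map (μ := gaussianReal 0 1) (φ := fun x => (-1:ℝ) * x)
    (measurable_const_mul (-1)).aemeasurable
    (f := fun x => x) measurable_id.aestronglyMeasurable
  rw [hmap] at this
  simp only [neg_one_mul] at this
  rw [integral_neg] at this
  linarith [this]

lemma integrable_sq_gauss : Integrable (fun x => x ^ 2) (gaussianReal 0 1) := by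
  rw [integrable_gauss_iff]
  have h := (integrable_rpow_mul_exp_neg_mul_sq (b := 1/2) (by norm_num)
    (s := 2) (by norm_num)).const_mul (√(2*π))⁻¹
  refine h.congr (Eventually.of_forall fun x => ?_)
  have h2 : x ^ (2:ℝ) = x ^ (2:ℕ) := by
    rw [show (2:ℝ) = ((2:ℕ):ℝ) by norm_num, Real.rpow_natCast]
  simp only [pdf01, h2]; ring

lemma integral_sq_exp_gauss : ∫ x : ℝ, x^2 * rexp (-(1/2) * x^2) = √(2*π) := by
  have hb : (0:ℝ) < 1/2 := by norm_num
  have hint1 : Integrable (fun x : ℝ => rexp (-(1/2) * x^2)) := by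
    simpa using integrable_exp_neg_mul_sq hb
  have hint2 : Integrable (fun x : ℝ => x^2 * rexp (-(1/2) * x^2)) := by
    have h := integrable_rpow_mul_exp_neg_mul_sq (b := 1/2) hb (s := 2) (by norm_num)
    refine h.congr (Eventually.of_forall fun x => ?_)
    have h2 : x ^ (2:ℝ) = x ^ (2:ℕ) := by
      rw [show (2:ℝ) = ((2:ℕ):ℝ) by norm_num, Real.rpow_natCast]
    simp only [h2]
  set φ : ℝ → ℝ := fun x => -x * rexp (-(1/2) * x^2) with hφ
  have hd : ∀ x : ℝ, HasDerivAt φ ((x^2 - 1) * rexp (-(1/2) * x^2)) x := by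
    intro x
    have h1 : HasDerivAt (fun x : ℝ => -(1/2) * x^2) (-(1/2) * (2 * x)) x := by
      simpa using ((hasDerivAt_pow 2 x).const_mul (-(1/2) : ℝ))
    have h2 : HasDerivAt (fun x : ℝ => rexp (-(1/2) * x^2))
        (rexp (-(1/2) * x^2) * (-(1/2) * (2 * x))) x := (Real.hasDerivAt_exp _).comp x h1
    have h3 : HasDerivAt (fun x : ℝ => -x) (-1) x := (hasDerivAt_id x).neg
    have := (h3.mul h2 : HasDerivAt (fun y : ℝ => -y * rexp (-(1/2) * y^2)) _ x)
    exact this.congr_deriv (by ring)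
  have hcc : Tendsto (fun x : ℝ => |x| ^ (1:ℝ) * rexp (-(1/2) * x ^ 2)) (cocompact ℝ) (𝓝 0) :=
    tendsto_rpow_abs_mul_exp_neg_mul_sq_cocompact hb 1
  have hcc' : Tendsto (fun x : ℝ => |x| * rexp (-(1/2) * x ^ 2)) (cocompact ℝ) (𝓝 0) := by
    simpa using hcc
  have habs : Tendsto (fun x : ℝ => |φ x|) (cocompact ℝ) (𝓝 0) := by
    refine hcc'.congr (fun x => ?_)
    rw [hφ]
    simp [abs_mul, Real.abs_exp]
  have hφ0 : Tendsto φ (cocompact ℝ) (𝓝 0) :=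
    tendsto_zero_iff_norm_tendsto_zero.mpr (by simpa using habs)
  have htop : Tendsto φ atTop (𝓝 0) :=
    hφ0.mono_left atTop_le_cocompact
  have hbot : Tendsto φ atBot (𝓝 0) :=
    hφ0.mono_left atBot_le_cocompact
  have hdint : Integrable (fun x : ℝ => (x^2 - 1) * rexp (-(1/2) * x^2)) := by
    have := hint2.sub hint1
    refine this.congr (Eventually.of_forall fun x => ?_)
    simp only [Pi.sub_apply]; ring
  have hIoi : ∫ x in Ioi (0:ℝ), (x^2 - 1) * rexp (-(1/2) * x^2) = 0 - φ 0 :=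
    integral_Ioi_of_hasDerivAt_of_tendsto' (fun x _ => hd x) hdint.integrableOn htop
  have hIic : ∫ x in Iic (0:ℝ), (x^2 - 1) * rexp (-(1/2) * x^2) = φ 0 - 0 :=
    integral_Iic_of_hasDerivAt_of_tendsto (hd 0).continuousAt.continuousWithinAt
      (fun x _ => hd x) hdint.integrableOn hbot
  have hsplit := intervalIntegral.integral_Iic_add_Ioi (b := (0:ℝ))
    hdint.integrableOn hdint.integrableOn
  have hzero : ∫ x : ℝ, (x^2 - 1) * rexp (-(1/2) * x^2) = 0 := by
    rw [← hsplit, hIoi, hIic]; ring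
  have hgauss : ∫ x : ℝ, rexp (-(1/2) * x^2) = √(2*π) := by
    have := integral_gaussian (1/2)
    rw [this]
    norm_num
    ring
  have hsub : ∫ x : ℝ, (x^2 - 1) * rexp (-(1/2) * x^2)
      = (∫ x : ℝ, x^2 * rexp (-(1/2) * x^2)) - ∫ x : ℝ, rexp (-(1/2) * x^2) := by
    rw [← integral_sub hint2 hint1]
    refine integral_congr_ae (Eventually.of_forall fun x => ?_)
    ring
  rw [hsub, hgauss] at hzero
  linarith

lemma integral_sq_gauss : ∫ x, x ^ 2 ∂(gaussianReal 0 1) = 1 := by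
  rw [integral_gauss]
  have : ∫ x : ℝ, gaussianPDFReal 0 1 x * x ^ 2
      = (√(2*π))⁻¹ * ∫ x : ℝ, x^2 * rexp (-(1/2) * x^2) := by
    rw [← integral_const_mul]
    refine integral_congr_ae (Eventually.of_forall fun x => ?_)
    simp only [pdf01]; ring
  rw [this, integral_sq_exp_gauss, inv_mul_cancel₀]
  positivity

/-! ### i.i.d. product moments -/

/-- Type synonym for `ℝ` carrying the standard Gaussian as its volume. -/
def G : Type := ℝ

instance : MeasurableSpace G := inferInstanceAs (MeasurableSpace ℝ)
instance : MeasureSpace G := ⟨gaussianReal 0 1⟩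
instance : IsProbabilityMeasure (volume : Measure G) :=
  inferInstanceAs (IsProbabilityMeasure (gaussianReal 0 1))

lemma integral_pi_gauss {n : ℕ} (f : Fin n → ℝ → ℝ) :
    ∫ z : Fin n → ℝ, ∏ i, f i (z i) ∂(Measure.pi fun _ => gaussianReal 0 1)
      = ∏ i, ∫ x, f i x ∂(gaussianReal 0 1) := by
  exact MeasureTheory.integral_fintype_prod_eq_prod (𝕜 := ℝ)
    (μ := fun _ : Fin n => gaussianReal 0 1) f

lemma integrable_pi_gauss {n : ℕ} (f : Fin n → ℝ → ℝ)
    (hf : ∀ i, Integrable (f i) (gaussianReal 0 1)) :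
    Integrable (fun z : Fin n → ℝ => ∏ i, f i (z i))
      (Measure.pi fun _ => gaussianReal 0 1) := by
  exact Integrable.fintype_prod_dep (μ := fun _ : Fin n => gaussianReal 0 1) (fun i => hf i)

variable {n : ℕ}

/-- coordinate product helper -/
def cf (k l : Fin n) (i : Fin n) : ℝ → ℝ :=
  fun x => (if i = k then x else 1) * (if i = l then x else 1)

lemma cf_prod (k l : Fin n) (z : Fin n → ℝ) : (∏ i, cf k l i (z i)) = z k * z l := by
  unfold cf
  rw [Finset.prod_mul_distrib]
  simp [Finset.prod_ite_eq']

lemma cf_integrable (k l i : Fin n) : Integrable (cf k l i) (gaussianReal 0 1) := by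
  unfold cf
  by_cases hik : i = k
  · subst hik
    by_cases hil : i = l
    · subst hil
      simpa [pow_two] using integrable_sq_gauss
    · simpa [hil] using integrable_id_gauss
  · by_cases hil : i = l
    · subst hil
      simpa [hik] using integrable_id_gauss
    · simpa [hik, hil] using (integrable_const (1:ℝ))

lemma integrable_mul_pi (k l : Fin n) :
    Integrable (fun z : Fin n → ℝ => z k * z l) (Measure.pi fun _ => gaussianReal 0 1) := by
  have := integrable_pi_gauss (cf k l) (cf_integrable k l)
  exact this.congr (Eventually.of_forall fun z => cf_prod k l z)

lemma integral_mul_pi (k l : Fin n) :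
    ∫ z : Fin n → ℝ, z k * z l ∂(Measure.pi fun _ => gaussianReal 0 1)
      = if k = l then 1 else 0 := by
  have h1 : ∫ z : Fin n → ℝ, z k * z l ∂(Measure.pi fun _ => gaussianReal 0 1)
      = ∏ i, ∫ x, cf k l i x ∂(gaussianReal 0 1) := by
    rw [← integral_pi_gauss]
    exact integral_congr_ae (Eventually.of_forall fun z => (cf_prod k l z).symm)
  rw [h1]
  by_cases hkl : k = l
  · subst hkl
    simp only [if_pos rfl]
    refine Finset.prod_eq_one fun i _ => ?_
    unfold cf
    by_cases hik : i = k
    · simp only [hik, if_pos rfl]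
      simpa [pow_two] using integral_sq_gauss
    · simp [hik]
  · rw [if_neg hkl]
    refine Finset.prod_eq_zero (Finset.mem_univ k) ?_
    unfold cf
    have : k ≠ l := hkl
    simp only [if_pos rfl, if_neg this, mul_one]
    exact integral_id_gauss

/-! ### Moments of the pushforward measure -/

lemma measurable_mulVec (A : Matrix (Fin n) (Fin n) ℝ) :
    Measurable (fun z : Fin n → ℝ => A.mulVec z) := by
  apply measurable_pi_lambda
  intro i
  simp only [Matrix.mulVec, dotProduct]
  exact Finset.measurable_sum _ (fun k _ => by fun_prop)

lemma mulVec_expand (A : Matrix (Fin n) (Fin n) ℝ) (i j : Fin n) (z : Fin n → ℝ) :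
    A.mulVec z i * A.mulVec z j = ∑ k, ∑ l, A i k * A j l * (z k * z l) := by
  simp only [Matrix.mulVec, dotProduct, Finset.sum_mul_sum]
  exact Finset.sum_congr rfl fun k _ => Finset.sum_congr rfl fun l _ => by ring

lemma integrable_moment_map (A : Matrix (Fin n) (Fin n) ℝ) (i j : Fin n) :
    Integrable (fun y : Fin n → ℝ => y i * y j)
      ((Measure.pi fun _ : Fin n => gaussianReal 0 1).map A.mulVec) := by
  rw [integrable_map_measure (g := fun y : Fin n → ℝ => y i * y j)
    (((measurable_pi_apply i).mul (measurable_pi_apply j)).aestronglyMeasurable)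
    (measurable_mulVec A).aemeasurable]
  have : Integrable (fun z : Fin n → ℝ => ∑ k, ∑ l, A i k * A j l * (z k * z l))
      (Measure.pi fun _ : Fin n => gaussianReal 0 1) := by
    refine integrable_finset_sum _ fun k _ => integrable_finset_sum _ fun l _ => ?_
    exact (integrable_mul_pi k l).const_mul _
  exact this.congr (Eventually.of_forall fun z => (mulVec_expand A i j z).symm)

lemma integral_moment_map (A : Matrix (Fin n) (Fin n) ℝ) (i j : Fin n) :
    ∫ y, y i * y j ∂((Measure.pi fun _ : Fin n => gaussianReal 0 1).map A.mulVec)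
      = ∑ k, A i k * A j k := by
  rw [integral_map (measurable_mulVec A).aemeasurable (f := fun y : Fin n → ℝ => y i * y j)
    (((measurable_pi_apply i).mul (measurable_pi_apply j)).aestronglyMeasurable)]
  calc ∫ z : Fin n → ℝ, A.mulVec z i * A.mulVec z j
        ∂(Measure.pi fun _ : Fin n => gaussianReal 0 1)
      = ∫ z : Fin n → ℝ, ∑ k, ∑ l, A i k * A j l * (z k * z l)
        ∂(Measure.pi fun _ : Fin n => gaussianReal 0 1) :=
        integral_congr_ae (Eventually.of_forall fun z => mulVec_expand A i j z)
    _ = ∑ k, ∫ z : Fin n → ℝ, ∑ l, A i k * A j l * (z k * z l)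
        ∂(Measure.pi fun _ : Fin n => gaussianReal 0 1) :=
        integral_finset_sum _ fun k _ =>
          integrable_finset_sum _ fun l _ => (integrable_mul_pi k l).const_mul _
    _ = ∑ k, ∑ l, ∫ z : Fin n → ℝ, A i k * A j l * (z k * z l)
        ∂(Measure.pi fun _ : Fin n => gaussianReal 0 1) :=
        Finset.sum_congr rfl fun k _ =>
          integral_finset_sum _ fun l _ => (integrable_mul_pi k l).const_mul _
    _ = ∑ k, ∑ l, A i k * A j l * if k = l then 1 else 0 := by
        refine Finset.sum_congr rfl fun k _ => Finset.sum_congr rfl fun l _ => ?_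
        rw [MeasureTheory.integral_const_mul, integral_mul_pi]
    _ = ∑ k, A i k * A j k := by
        refine Finset.sum_congr rfl fun k _ => ?_
        simp [mul_ite, Finset.sum_ite_eq]

/-! ### Positive definiteness of principal submatrices and trace expansions -/

lemma psub_posDef {C : Matrix (Fin n) (Fin n) ℝ} (h : C.PosDef) (S : Finset (Fin n)) :
    (psub C S).PosDef := by
  exact h.submatrix Subtype.val_injective

lemma quad_expand (S : Finset (Fin n)) (B : Matrix {x // x ∈ S} {x // x ∈ S} ℝ)
    (y : Fin n → ℝ) :
    subvec y S ⬝ᵥ B.mulVec (subvec y S)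
      = ∑ i : {x // x ∈ S}, ∑ j : {x // x ∈ S}, B i j * (y (i : Fin n) * y (j : Fin n)) := by
  simp only [dotProduct, Matrix.mulVec, subvec, Finset.mul_sum]
  exact Finset.sum_congr rfl fun i _ => Finset.sum_congr rfl fun j _ => by ring

lemma trace_expand {C : Matrix (Fin n) (Fin n) ℝ} (hC : C.IsHermitian) (S : Finset (Fin n))
    (B : Matrix {x // x ∈ S} {x // x ∈ S} ℝ) :
    Matrix.trace (B * psub C S)
      = ∑ i : {x // x ∈ S}, ∑ j : {x // x ∈ S}, B i j * C (i : Fin n) (j : Fin n) := by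
  simp only [Matrix.trace, Matrix.diag, Matrix.mul_apply, psub, Matrix.submatrix_apply]
  refine Finset.sum_congr rfl fun i _ => Finset.sum_congr rfl fun j _ => ?_
  congr 1
  have := hC.apply (j : Fin n) (i : Fin n)
  simpa [star_trivial] using this.symm

end VecchiaAux

open VecchiaAux

/-- if `y ∼ N_n(0, Σ₀)` with `Σ₀` positive definite, then for every symmetric
matrix `M` the expected Vecchia score at the true covariance vanishes; i.e. the Vecchia
gradient equations are unbiased estimating equations at the true parameter. -/
theorem vecchia_score_unbiased (n : ℕ) (hn : 1 ≤ n) (c : Fin n → Finset (Fin n))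
    (hc : ∀ i : Fin n, ∀ j ∈ c i, j < i)
    (C₀ : Matrix (Fin n) (Fin n) ℝ) (hC₀ : C₀.PosDef)
    (M : Matrix (Fin n) (Fin n) ℝ) (hM : M.IsSymm) :
    ∑ i : Fin n,
      ((∫ y, vecchiaScoreTerm C₀ M (insert i (c i)) y
          ∂(multivariateGaussian hC₀.posSemidef)) -
        (∫ y, vecchiaScoreTerm C₀ M (c i) y ∂(multivariateGaussian hC₀.posSemidef))) = 0 := by
  classical
  set A : Matrix (Fin n) (Fin n) ℝ := (hC₀.posSemidef.1.eigenvectorUnitary : Matrix (Fin n) (Fin n) ℝ) *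
    diagonal (Real.sqrt ∘ hC₀.posSemidef.1.eigenvalues) *
    (star hC₀.posSemidef.1.eigenvectorUnitary : Matrix (Fin n) (Fin n) ℝ) with hA
  set μ := multivariateGaussian hC₀.posSemidef with hμ
  have hμdef : μ = (Measure.pi fun _ : Fin n => gaussianReal 0 1).map A.mulVec := rfl
  haveI : IsProbabilityMeasure μ := by
    rw [hμdef]
    exact Measure.isProbabilityMeasure_map (measurable_mulVec A).aemeasurable
  -- second moments of μ
  have hAH : ∀ a b, A a b = A b a := by
    intro a b
    have h : Aᴴ = A := by
      rw [hA]
      simp [Matrix.mul_assoc, star_eq_conjTranspose]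
    have := congrFun (congrFun h b) a
    simpa [conjTranspose_apply] using this
  have hAA : A * A = C₀ := by
    have hU : (star hC₀.posSemidef.1.eigenvectorUnitary : Matrix (Fin n) (Fin n) ℝ) *
        (hC₀.posSemidef.1.eigenvectorUnitary : Matrix (Fin n) (Fin n) ℝ) = 1 :=
      Unitary.coe_star_mul_self _
    have hD : diagonal (Real.sqrt ∘ hC₀.posSemidef.1.eigenvalues) *
        diagonal (Real.sqrt ∘ hC₀.posSemidef.1.eigenvalues)
        = diagonal (RCLike.ofReal ∘ hC₀.posSemidef.1.eigenvalues) := by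
      rw [diagonal_mul_diagonal]
      congr 1
      funext k
      simp [Real.mul_self_sqrt (hC₀.posSemidef.eigenvalues_nonneg k)]
    conv_rhs => rw [hC₀.posSemidef.1.spectral_theorem, Unitary.conjStarAlgAut_apply]
    rw [hA, ← hD]
    simp only [Matrix.mul_assoc]
    rw [← Matrix.mul_assoc (star _ : Matrix (Fin n) (Fin n) ℝ) _ (diagonal _ * _), hU, Matrix.one_mul]
  have moment : ∀ i j : Fin n, ∫ y, y i * y j ∂μ = C₀ i j := by
    intro i j
    rw [hμdef, integral_moment_map]
    have : ∑ k, A i k * A j k = ∑ k, A i k * A k j :=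
      Finset.sum_congr rfl fun k _ => by rw [hAH j k]
    rw [this, ← Matrix.mul_apply, hAA]
  have integrable_moment : ∀ i j : Fin n, Integrable (fun y : Fin n → ℝ => y i * y j) μ := by
    intro i j
    rw [hμdef]
    exact integrable_moment_map A i j
  -- quadratic forms
  have integrable_quad : ∀ (S : Finset (Fin n)) (B : Matrix {x // x ∈ S} {x // x ∈ S} ℝ),
      Integrable (fun y : Fin n → ℝ => subvec y S ⬝ᵥ B.mulVec (subvec y S)) μ := by
    intro S B
    have : Integrable (fun y : Fin n → ℝ =>
        ∑ i : {x // x ∈ S}, ∑ j : {x // x ∈ S},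
          B i j * (y (i : Fin n) * y (j : Fin n))) μ :=
      integrable_finset_sum _ fun i _ => integrable_finset_sum _ fun j _ =>
        (integrable_moment _ _).const_mul _
    exact this.congr (MeasureTheory.ae_of_all _ fun y => (quad_expand S B y).symm)
  have integral_quad : ∀ (S : Finset (Fin n)) (B : Matrix {x // x ∈ S} {x // x ∈ S} ℝ),
      ∫ y, subvec y S ⬝ᵥ B.mulVec (subvec y S) ∂μ = Matrix.trace (B * psub C₀ S) := by
    intro S B
    calc ∫ y, subvec y S ⬝ᵥ B.mulVec (subvec y S) ∂μ
        = ∫ y, ∑ i : {x // x ∈ S}, ∑ j : {x // x ∈ S},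
            B i j * (y (i : Fin n) * y (j : Fin n)) ∂μ :=
          integral_congr_ae (MeasureTheory.ae_of_all _ fun y => quad_expand S B y)
      _ = ∑ i : {x // x ∈ S}, ∫ y, ∑ j : {x // x ∈ S},
            B i j * (y (i : Fin n) * y (j : Fin n)) ∂μ :=
          integral_finset_sum _ fun i _ =>
            integrable_finset_sum _ fun j _ => (integrable_moment _ _).const_mul _
      _ = ∑ i : {x // x ∈ S}, ∑ j : {x // x ∈ S},
            ∫ y, B i j * (y (i : Fin n) * y (j : Fin n)) ∂μ :=
          Finset.sum_congr rfl fun i _ =>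
            integral_finset_sum _ fun j _ => (integrable_moment _ _).const_mul _
      _ = ∑ i : {x // x ∈ S}, ∑ j : {x // x ∈ S},
            B i j * C₀ (i : Fin n) (j : Fin n) := by
          refine Finset.sum_congr rfl fun i _ => Finset.sum_congr rfl fun j _ => ?_
          rw [MeasureTheory.integral_const_mul, moment]
      _ = Matrix.trace (B * psub C₀ S) := (trace_expand hC₀.isHermitian S B).symm
  -- each score term integrates to zero
  have score_zero : ∀ S : Finset (Fin n), ∫ y, vecchiaScoreTerm C₀ M S y ∂μ = 0 := by
    intro S
    unfold vecchiaScoreTerm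
    rw [integral_sub (integrable_quad S _) (integrable_const _), integral_quad, integral_const]
    have hdet : IsUnit (psub C₀ S).det :=
      isUnit_iff_ne_zero.mpr (psub_posDef hC₀ S).det_pos.ne'
    rw [mul_assoc, Matrix.nonsing_inv_mul _ hdet, mul_one]
    simp
  simp only [score_zero, sub_zero, Finset.sum_const_zero]

end
end
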